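/- For every real number λ with 0 < |λ| < 1/24, the series ∑_{n=0}^∞ (2/(n+2))·(3^n/(n+1))·binomial(2n, n)·(−2λ)^n converges and its sum equals (−1 − 36λ + (1 + 24λ)^{3/2})/(216·λ²). -/

import Mathlib

open Set

/-- Generalized binomial coefficients `(3/2).choose k`. -/
noncomputable def bc : ℕ → ℝ
  | 0 => 1
  | (k + 1) => bc k * (3 / 2 - k) / (k + 1)

lemma bc_rec (k : ℕ) : ((k : ℝ) + 1) * bc (k + 1) = (3 / 2 - k) * bc k := by
  have hk : ((k : ℝ) + 1) ≠ 0 := by positivity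
  rw [bc]
  field_simp

lemma bc_abs (k : ℕ) : |bc k| ≤ 3 / 2 := by
  induction k with
  | zero => simp [bc]; norm_num
  | succ k ih =>
    rcases Nat.eq_zero_or_pos k with hk | hk
    · subst hk
      have : bc 1 = 3 / 2 := by norm_num [bc]
      rw [this, abs_of_nonneg] <;> norm_num
    · have h1 : |3 / 2 - (k : ℝ)| ≤ (k : ℝ) + 1 := by
        have : (1 : ℝ) ≤ (k : ℝ) := by exact_mod_cast hk
        rw [abs_le]; constructor <;> linarith
      have h2 : ((k : ℝ) + 1) > 0 := by positivity
      have : |bc (k + 1)| = |bc k| * |3 / 2 - (k : ℝ)| / ((k : ℝ) + 1) := by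
        rw [bc, abs_div, abs_mul, abs_of_pos h2]
      rw [this]
      rw [div_le_iff₀ h2]
      calc |bc k| * |3 / 2 - (k : ℝ)| ≤ (3 / 2) * ((k : ℝ) + 1) := by
            apply mul_le_mul ih h1 (abs_nonneg _) (by norm_num)
        _ = 3 / 2 * ((k : ℝ) + 1) := rfl

lemma bc_summable {y : ℝ} (hy : |y| < 1) : Summable (fun k => bc k * y ^ k) := by
  apply Summable.of_norm_bounded (g := fun k => (3 / 2) * |y| ^ k)
  · exact (summable_geometric_of_lt_one (abs_nonneg y) hy).mul_left _
  · intro k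
    rw [Real.norm_eq_abs, abs_mul, abs_pow]
    exact mul_le_mul_of_nonneg_right (bc_abs k) (by positivity)

lemma bc_deriv_summable {r : ℝ} (hr0 : 0 < r) (hr : r < 1) :
    Summable (fun k : ℕ => (3 / 2) * ((k : ℝ) * r ^ (k - 1))) := by
  apply Summable.mul_left
  have h : Summable (fun k : ℕ => (k : ℝ) * r ^ k) := by
    simpa using summable_pow_mul_geometric_of_norm_lt_one (R := ℝ) 1
      (by rwa [Real.norm_eq_abs, abs_of_pos hr0])
  have := h.mul_left (r⁻¹)
  apply this.congr
  intro k
  cases k with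
  | zero => simp
  | succ k =>
    simp only [Nat.add_sub_cancel, pow_succ]
    field_simp

/-- The sum function of the series. -/
noncomputable def bcF (y : ℝ) : ℝ := ∑' k, bc k * y ^ k

lemma bc_term_hasDerivAt (k : ℕ) (y : ℝ) :
    HasDerivAt (fun z => bc k * z ^ k) (bc k * ((k : ℝ) * y ^ (k - 1))) y :=
  (hasDerivAt_pow k y).const_mul (bc k)

lemma bcF_hasDerivAt {y : ℝ} (hy : |y| < 1) :
    HasDerivAt bcF (∑' k, bc k * ((k : ℝ) * y ^ (k - 1))) y := by
  set r : ℝ := (1 + |y|) / 2 with hr_def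
  have hr0 : 0 < r := by positivity
  have hr1 : r < 1 := by simp only [hr_def]; linarith
  have hyr : |y| < r := by simp only [hr_def]; linarith
  have hmem : y ∈ Ioo (-r) r := abs_lt.mp hyr
  exact hasDerivAt_tsum_of_isPreconnected (bc_deriv_summable hr0 hr1) isOpen_Ioo
    (convex_Ioo _ _).isPreconnected
    (fun k z _ => bc_term_hasDerivAt k z)
    (fun k z hz => by
      have hz' : |z| < r := abs_lt.mpr hz
      rw [Real.norm_eq_abs, abs_mul, abs_mul, abs_pow]
      calc |bc k| * (|(k : ℝ)| * |z| ^ (k - 1))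
          ≤ (3 / 2) * ((k : ℝ) * r ^ (k - 1)) := by
            apply mul_le_mul (bc_abs k)
            · apply mul_le_mul (le_of_eq (abs_of_nonneg (Nat.cast_nonneg k)))
                (pow_le_pow_left₀ (abs_nonneg z) hz'.le _) (by positivity)
                (Nat.cast_nonneg k)
            · positivity
            · norm_num)
    hmem (bc_summable hy) hmem

lemma bcF_eq {y : ℝ} (hy : |y| < 1) : bcF y = (1 + y) ^ ((3 : ℝ) / 2) := by
  -- the function G z = bcF z * (1+z)^(-3/2) has zero derivative on Ioo (-1) 1
  set G : ℝ → ℝ := fun z => bcF z * (1 + z) ^ (-(3 : ℝ) / 2) with hG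
  have key : ∀ z ∈ Ioo (-1 : ℝ) 1, HasDerivAt G 0 z := by
    intro z hz
    have hz' : |z| < 1 := abs_lt.mpr hz
    have h1z : (0 : ℝ) < 1 + z := by have := hz.1; linarith
    set T : ℝ := ∑' k, bc k * ((k : ℝ) * z ^ (k - 1)) with hT_def
    have hd : HasDerivAt bcF T z := bcF_hasDerivAt hz'
    -- the power term
    have hrp : HasDerivAt (fun w : ℝ => (1 + w) ^ (-(3 : ℝ) / 2))
        (1 * (-(3 : ℝ) / 2) * (1 + z) ^ (-(3 : ℝ) / 2 - 1)) z := by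
      have h := ((hasDerivAt_id z).const_add 1).rpow_const
        (p := -(3 : ℝ) / 2) (Or.inl (ne_of_gt h1z))
      simpa using h
    have hGd : HasDerivAt G
        (T * (1 + z) ^ (-(3 : ℝ) / 2)
          + bcF z * (1 * (-(3 : ℝ) / 2) * (1 + z) ^ (-(3 : ℝ) / 2 - 1))) z :=
      hd.mul hrp
    -- key algebraic identity : (1+z) * T = (3/2) * bcF z
    have hident : (1 + z) * T = (3 / 2) * bcF z := by
      have hσ : Summable (fun k => bc k * ((k : ℝ) * z ^ (k - 1))) := by
        set r : ℝ := (1 + |z|) / 2 with hr_def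
        have hr0 : 0 < r := by positivity
        have hr1 : r < 1 := by simp only [hr_def]; linarith
        have hzr : |z| ≤ r := by simp only [hr_def]; linarith
        apply Summable.of_norm_bounded (bc_deriv_summable hr0 hr1)
        intro k
        rw [Real.norm_eq_abs, abs_mul, abs_mul, abs_pow]
        apply mul_le_mul (bc_abs k)
        · apply mul_le_mul (le_of_eq (abs_of_nonneg (Nat.cast_nonneg k)))
            (pow_le_pow_left₀ (abs_nonneg z) hzr _) (by positivity) (Nat.cast_nonneg k)
        · positivity
        · norm_num
      have hT : HasSum (fun k => bc k * ((k : ℝ) * z ^ (k - 1))) T := hσ.hasSum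
      have hS : HasSum (fun k => bc k * z ^ k) (bcF z) := (bc_summable hz').hasSum
      -- shifted version of hT
      have hT1 : HasSum (fun k => bc (k + 1) * (((k : ℕ) + 1 : ℝ) * z ^ k)) T := by
        have h0 : (fun k => bc k * ((k : ℝ) * z ^ (k - 1))) 0 = 0 := by simp
        have h2 := (hasSum_nat_add_iff
            (f := fun k => bc k * ((k : ℝ) * z ^ (k - 1))) 1 (g := T)).2
        simp only [Finset.sum_range_one, Nat.cast_zero, zero_mul, mul_zero, add_zero] at h2
        have h3 := h2 hT
        apply h3.congr_fun
        intro k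
        push_cast
        ring_nf
      -- use recurrence: bc (k+1) * (k+1) = (3/2 - k) * bc k
      have hT2 : HasSum (fun k : ℕ => (3 / 2 - (k : ℝ)) * bc k * z ^ k) T := by
        apply hT1.congr_fun
        intro k
        have := bc_rec k
        calc (3 / 2 - (k : ℝ)) * bc k * z ^ k
            = (((k : ℝ) + 1) * bc (k + 1)) * z ^ k := by rw [this]
          _ = bc (k + 1) * (((k : ℕ) + 1 : ℝ) * z ^ k) := by push_cast; ring
      -- z * T
      have hT3 : HasSum (fun k : ℕ => (k : ℝ) * bc k * z ^ k) (z * T) := by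
        have := hT.mul_left z
        apply this.congr_fun
        intro k
        cases k with
        | zero => simp
        | succ k => simp only [Nat.add_sub_cancel]; push_cast; ring
      have hsum : HasSum (fun k : ℕ => (3 / 2) * (bc k * z ^ k)) (T + z * T) := by
        have := hT2.add hT3
        apply this.congr_fun
        intro k
        ring
      have h32 : HasSum (fun k : ℕ => (3 / 2) * (bc k * z ^ k)) ((3 / 2) * bcF z) :=
        hS.mul_left _
      have := hsum.unique h32
      linarith [this]
    -- now show the derivative is zero
    have hrw : (1 + z) ^ (-(3 : ℝ) / 2) = (1 + z) * (1 + z) ^ (-(3 : ℝ) / 2 - 1) := by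
      rw [← Real.rpow_one_add' h1z.le (by norm_num)]
      norm_num
    have : T * (1 + z) ^ (-(3 : ℝ) / 2)
        + bcF z * (1 * (-(3 : ℝ) / 2) * (1 + z) ^ (-(3 : ℝ) / 2 - 1))
        = ((1 + z) * T - (3 / 2) * bcF z) * (1 + z) ^ (-(3 : ℝ) / 2 - 1) := by
      rw [hrw]; ring
    rw [this, hident, sub_self, zero_mul] at hGd
    exact hGd
  -- G is constant on Ioo (-1) 1, equal to G 0 = 1
  have hG0 : G 0 = 1 := by
    have : bcF 0 = 1 := by
      have h : HasSum (fun k : ℕ => bc k * (0 : ℝ) ^ k) (bc 0 * (0 : ℝ) ^ 0) := by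
        apply hasSum_single 0
        intro k hk
        cases k with
        | zero => exact absurd rfl hk
        | succ k => simp
      simpa [bc, bcF] using h.tsum_eq
    simp [hG, this]
  have hGy : G y = 1 := by
    rcases le_or_gt 0 y with h | h
    · have hsub : Icc (0 : ℝ) y ⊆ Ioo (-1 : ℝ) 1 := fun t ht =>
        ⟨by linarith [ht.1], lt_of_le_of_lt ht.2 (abs_lt.mp hy).2⟩
      have := constant_of_has_deriv_right_zero (f := G) (a := 0) (b := y)
        (fun t ht => ((key t (hsub ht)).continuousAt).continuousWithinAt)
        (fun t ht => ((key t (hsub (Ico_subset_Icc_self ht))).hasDerivWithinAt))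
        y (right_mem_Icc.mpr h)
      rw [this, hG0]
    · have hsub : Icc y (0 : ℝ) ⊆ Ioo (-1 : ℝ) 1 := fun t ht =>
        ⟨lt_of_lt_of_le (abs_lt.mp hy).1 ht.1, by linarith [ht.2]⟩
      have := constant_of_has_deriv_right_zero (f := G) (a := y) (b := 0)
        (fun t ht => ((key t (hsub ht)).continuousAt).continuousWithinAt)
        (fun t ht => ((key t (hsub (Ico_subset_Icc_self ht))).hasDerivWithinAt))
        0 (right_mem_Icc.mpr h.le)
      rw [← this, hG0]
  -- unfold
  have h1y : (0 : ℝ) < 1 + y := by have := (abs_lt.mp hy).1; linarith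
  have hne : (1 + y) ^ (-(3 : ℝ) / 2) ≠ 0 := by
    exact ne_of_gt (Real.rpow_pos_of_pos h1y _)
  have : bcF y * (1 + y) ^ (-(3 : ℝ) / 2) = 1 := hGy
  have h2 : bcF y = ((1 + y) ^ (-(3 : ℝ) / 2))⁻¹ := by
    field_simp at this ⊢
    linarith [this]
  rw [h2, ← Real.rpow_neg h1y.le]
  norm_num

/-- The binomial series for exponent 3/2. -/
lemma bc_hasSum {y : ℝ} (hy : |y| < 1) :
    HasSum (fun k => bc k * y ^ k) ((1 + y) ^ ((3 : ℝ) / 2)) := by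
  have := (bc_summable hy).hasSum
  rwa [show (∑' k, bc k * y ^ k) = (1 + y) ^ ((3 : ℝ) / 2) from bcF_eq hy] at this

/-- Closed form for shifted coefficients. -/
lemma bc_closed (n : ℕ) :
    bc (n + 2) * (-4 : ℝ) ^ (n + 2) =
      12 * (Nat.choose (2 * n) n : ℝ) / (((n : ℝ) + 1) * ((n : ℝ) + 2)) := by
  induction n with
  | zero => norm_num [bc]
  | succ n ih =>
    have hrec := bc_rec (n + 2)
    have hn1 : ((n : ℝ) + 1) ≠ 0 := by positivity
    have hn2 : ((n : ℝ) + 2) ≠ 0 := by positivity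
    have hn3 : ((n : ℝ) + 3) ≠ 0 := by positivity
    have hchoose : (Nat.choose (2 * (n + 1)) (n + 1) : ℝ) =
        (Nat.choose (2 * n) n : ℝ) * (2 * (n : ℝ) + 1) * 2 / ((n : ℝ) + 1) := by
      have h := Nat.succ_mul_centralBinom_succ n
      simp only [Nat.centralBinom] at h
      have h2 : ((n : ℝ) + 1) * (Nat.choose (2 * (n + 1)) (n + 1) : ℝ)
          = 2 * (2 * (n : ℝ) + 1) * (Nat.choose (2 * n) n : ℝ) := by
        exact_mod_cast congrArg (Nat.cast (R := ℝ)) h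
      field_simp
      linarith [h2]
    -- bc (n+3) = bc (n+2) * (3/2 - (n+2)) / (n+3)
    have hb : bc (n + 3) = bc (n + 2) * (3 / 2 - ((n : ℝ) + 2)) / ((n : ℝ) + 3) := by
      show bc ((n + 2) + 1) = _
      rw [bc]
      push_cast
      ring_nf
    have : bc (n + 3) * (-4 : ℝ) ^ (n + 3)
        = bc (n + 2) * (-4 : ℝ) ^ (n + 2) * ((4 * (n : ℝ) + 2) / ((n : ℝ) + 3)) := by
      rw [hb, pow_succ]
      field_simp
      ring
    rw [show n + 1 + 2 = n + 3 from rfl, this, ih, hchoose]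
    field_simp
    push_cast
    ring

/-- The planar two-point function of the quartic matrix model: for `0 < |λ| < 1/24`,
`∑ (2/(n+2))·(3ⁿ/(n+1))·C(2n,n)·(-2λ)ⁿ = (-1 - 36λ + (1+24λ)^{3/2})/(216 λ²)`. -/
theorem matrix_planar_two_point (l : ℝ) (h0 : 0 < |l|) (h1 : |l| < 1 / 24) :
    HasSum
      (fun n : ℕ => 2 / ((n : ℝ) + 2) * ((3 : ℝ) ^ n / ((n : ℝ) + 1)) *
        (Nat.choose (2 * n) n : ℝ) * (-2 * l) ^ n)
      ((-1 - 36 * l + (1 + 24 * l) ^ ((3 : ℝ) / 2)) / (216 * l ^ 2)) := by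
  have hl : l ≠ 0 := by
    intro h; rw [h] at h0; simp at h0
  set y : ℝ := 24 * l with hy_def
  have hy : |y| < 1 := by
    rw [hy_def, abs_mul]
    calc |(24 : ℝ)| * |l| < 24 * (1 / 24) := by
          rw [abs_of_pos (by norm_num : (0:ℝ) < 24)]
          exact mul_lt_mul_of_pos_left h1 (by norm_num)
      _ = 1 := by norm_num
  have hbig : HasSum (fun k => bc k * y ^ k) ((1 + y) ^ ((3 : ℝ) / 2)) := bc_hasSum hy
  -- shift by 2
  have hshift : HasSum (fun n : ℕ => bc (n + 2) * y ^ (n + 2))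
      ((1 + y) ^ ((3 : ℝ) / 2) - (1 + (3 / 2) * y)) := by
    rw [hasSum_nat_add_iff (f := fun k => bc k * y ^ k) 2]
    have : ∑ i ∈ Finset.range 2, bc i * y ^ i = 1 + (3 / 2) * y := by
      rw [Finset.sum_range_succ, Finset.sum_range_one]
      norm_num [bc]
    rw [this]
    rw [sub_add_cancel]
    exact hbig
  have hdiv := hshift.mul_left (1 / (216 * l ^ 2))
  convert hdiv using 1
  · rfl
  · funext n
    have hn1 : ((n : ℝ) + 1) ≠ 0 := by positivity
    have hn2 : ((n : ℝ) + 2) ≠ 0 := by positivity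
    have hl2 : (l : ℝ) ^ 2 ≠ 0 := pow_ne_zero _ hl
    -- y^(n+2) = (-4)^(n+2) * (-6l)^(n+2)
    have hyp : y ^ (n + 2) = (-4 : ℝ) ^ (n + 2) * (-6 * l) ^ (n + 2) := by
      rw [← mul_pow]
      congr 1
      rw [hy_def]; ring
    have key : (-6 * l : ℝ) ^ (n + 2) = 36 * l ^ 2 * ((3 : ℝ) ^ n * (-2 * l) ^ n) := by
      have h1 : (-6 * l : ℝ) = (3 : ℝ) * (-2 * l) := by ring
      rw [h1, mul_pow, pow_succ, pow_succ, pow_succ, pow_succ]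
      ring
    rw [hyp, show bc (n + 2) * ((-4 : ℝ) ^ (n + 2) * (-6 * l) ^ (n + 2))
        = (bc (n + 2) * (-4 : ℝ) ^ (n + 2)) * (-6 * l) ^ (n + 2) by ring,
      bc_closed n, key]
    field_simp
    ring
  · have hl2 : (l : ℝ) ^ 2 ≠ 0 := pow_ne_zero _ hl
    simp only [hy_def]
    field_simp
    ring
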